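/- Let L = (ℓ_j)_{j≥1} be a fractal string of Minkowski dimension D ∈ (0,1). Set α_* = liminf_{j→∞} ℓ_j · j^{1/D}, α^* = limsup_{j→∞} ℓ_j · j^{1/D}, and, with φ_ν(x) = W(x) − N_ν(x), set δ_* = liminf_{x→+∞} φ_ν(x)/x^D and δ^* = limsup_{x→+∞} φ_ν(x)/x^D. Then 0 < α_* ≤ α^* < ∞ holds if and only if 0 < δ_* ≤ δ^* < ∞ holds. -/

import Mathlib

open Filter Topology

/-- A fractal string: a nonincreasing, positive, summable sequence of lengths
`ℓ 0 ≥ ℓ 1 ≥ ⋯ > 0` (indexed from `0`, representing `ℓ_1, ℓ_2, …`). -/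
def IsFractalString (ℓ : ℕ → ℝ) : Prop :=
  (∀ j, 0 < ℓ j) ∧ Antitone ℓ ∧ Summable ℓ

/-- The volume `V(ε) = ∑ⱼ min(ℓⱼ, 2ε)` of the inner ε-neighborhood of the boundary. -/
noncomputable def stringVol (ℓ : ℕ → ℝ) (ε : ℝ) : ℝ :=
  ∑' j, min (ℓ j) (2 * ε)

/-- Upper `d`-dimensional Minkowski content `limsup_{ε→0⁺} V(ε)/ε^{1-d}`. -/
noncomputable def upperContent (ℓ : ℕ → ℝ) (d : ℝ) : ENNReal :=
  Filter.limsup (fun ε : ℝ => ENNReal.ofReal (stringVol ℓ ε / ε ^ (1 - d))) (𝓝[>] 0)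

/-- Lower `d`-dimensional Minkowski content `liminf_{ε→0⁺} V(ε)/ε^{1-d}`. -/
noncomputable def lowerContent (ℓ : ℕ → ℝ) (d : ℝ) : ENNReal :=
  Filter.liminf (fun ε : ℝ => ENNReal.ofReal (stringVol ℓ ε / ε ^ (1 - d))) (𝓝[>] 0)

/-- The Minkowski dimension `D = inf {d ≥ 0 : M*_d < ∞}`. -/
noncomputable def minkDim (ℓ : ℕ → ℝ) : ℝ :=
  sInf {d : ℝ | 0 ≤ d ∧ upperContent ℓ d < ⊤}

/-- The spectral (frequency) counting function `N_ν(x) = ∑ⱼ ⌊ℓⱼ x⌋`. -/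
noncomputable def spectralCount (ℓ : ℕ → ℝ) (x : ℝ) : ℝ :=
  ∑' j, (⌊ℓ j * x⌋₊ : ℝ)

/-- The Weyl term `W(x) = (∑ⱼ ℓⱼ) x`. -/
noncomputable def weylTerm (ℓ : ℕ → ℝ) (x : ℝ) : ℝ :=
  (∑' j, ℓ j) * x

/-- The geometric counting function `N_L(x) = #{j ≥ 1 : ℓⱼ⁻¹ ≤ x}`. -/
noncomputable def geomCount (ℓ : ℕ → ℝ) (x : ℝ) : ℝ :=
  (({j : ℕ | (ℓ j)⁻¹ ≤ x}).ncard : ℝ)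

/-- The "asymptotic second term" `φ_ν(x) = W(x) - N_ν(x)`. -/
noncomputable def phiNu (ℓ : ℕ → ℝ) (x : ℝ) : ℝ :=
  weylTerm ℓ x - spectralCount ℓ x

/-- `L` is Minkowski measurable (in dimension `D`) with Minkowski content `M`:
`V(ε)/ε^{1-D} → M` as `ε → 0⁺`. -/
def MinkMeasurableWith (ℓ : ℕ → ℝ) (D M : ℝ) : Prop :=
  Tendsto (fun ε : ℝ => stringVol ℓ ε / ε ^ (1 - D)) (𝓝[>] (0:ℝ)) (𝓝 M)

/-- `L` is Minkowski measurable in dimension `D` (with some positive finite content). -/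
def MinkMeasurable (ℓ : ℕ → ℝ) (D : ℝ) : Prop :=
  ∃ M : ℝ, 0 < M ∧ MinkMeasurableWith ℓ D M

/-- Hypothesis (6.1): `N_ν(x) = W(x) - C x^D + o(x^D)` as `x → +∞`. -/
def SpectralAsymp (ℓ : ℕ → ℝ) (D C : ℝ) : Prop :=
  Tendsto (fun x : ℝ => (spectralCount ℓ x - (weylTerm ℓ x - C * x ^ D)) / x ^ D)
    atTop (𝓝 0)

/-- The inverse spectral problem `(ISP)_D`: every fractal string of Minkowski
dimension `D` satisfying (6.1) is Minkowski measurable. -/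
def ISP (D : ℝ) : Prop :=
  ∀ ℓ : ℕ → ℝ, IsFractalString ℓ → minkDim ℓ = D →
    (∃ C : ℝ, C ≠ 0 ∧ SpectralAsymp ℓ D C) → MinkMeasurable ℓ D


section helpers
variable {ℓ : ℕ → ℝ}

/-- tail sum -/
noncomputable def myTail (ℓ : ℕ → ℝ) (m : ℕ) : ℝ := ∑' j, ℓ (j + m)

lemma summable_floor (hsum : Summable ℓ) (hpos : ∀ j, 0 < ℓ j) {x : ℝ} (hx : 0 ≤ x) :
    Summable (fun j => ((⌊ℓ j * x⌋₊ : ℕ) : ℝ)) := by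
  refine Summable.of_nonneg_of_le (fun j => by positivity) (fun j => Nat.floor_le ?_)
    (hsum.mul_right x)
  exact mul_nonneg (hpos j).le hx

lemma summable_g (hsum : Summable ℓ) (hpos : ∀ j, 0 < ℓ j) {x : ℝ} (hx : 0 ≤ x) :
    Summable (fun j => ℓ j * x - (⌊ℓ j * x⌋₊ : ℝ)) :=
  (hsum.mul_right x).sub (summable_floor hsum hpos hx)

lemma phi_eq (hsum : Summable ℓ) (hpos : ∀ j, 0 < ℓ j) {x : ℝ} (hx : 0 ≤ x) :
    phiNu ℓ x = ∑' j, (ℓ j * x - (⌊ℓ j * x⌋₊ : ℝ)) := by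
  rw [phiNu, weylTerm, spectralCount, ← tsum_mul_right,
    Summable.tsum_sub (hsum.mul_right x) (summable_floor hsum hpos hx)]

lemma g_nonneg (hpos : ∀ j, 0 < ℓ j) {x : ℝ} (hx : 0 ≤ x) (j : ℕ) :
    0 ≤ ℓ j * x - (⌊ℓ j * x⌋₊ : ℝ) :=
  sub_nonneg.2 (Nat.floor_le (mul_nonneg (hpos j).le hx))

lemma g_le_one {x : ℝ} (j : ℕ) : ℓ j * x - (⌊ℓ j * x⌋₊ : ℝ) ≤ 1 := by
  have := Nat.sub_one_lt_floor (ℓ j * x)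
  linarith

lemma phi_nonneg (hsum : Summable ℓ) (hpos : ∀ j, 0 < ℓ j) {x : ℝ} (hx : 0 ≤ x) :
    0 ≤ phiNu ℓ x := by
  rw [phi_eq hsum hpos hx]
  exact tsum_nonneg (g_nonneg hpos hx)

lemma myTail_nonneg (hpos : ∀ j, 0 < ℓ j) (m : ℕ) : 0 ≤ myTail ℓ m :=
  tsum_nonneg fun j => (hpos (j + m)).le

lemma summable_tail (hsum : Summable ℓ) (m : ℕ) : Summable fun j => ℓ (j + m) :=
  (summable_nat_add_iff m).2 hsum

/-- upper bound: φ(x) ≤ m + x * Tail m -/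
lemma phi_upper (hsum : Summable ℓ) (hpos : ∀ j, 0 < ℓ j) {x : ℝ} (hx : 0 ≤ x) (m : ℕ) :
    phiNu ℓ x ≤ m + x * myTail ℓ m := by
  rw [phi_eq hsum hpos hx, ← Summable.sum_add_tsum_nat_add m (summable_g hsum hpos hx)]
  have h1 : ∑ j ∈ Finset.range m, (ℓ j * x - (⌊ℓ j * x⌋₊ : ℝ)) ≤ m := by
    calc ∑ j ∈ Finset.range m, (ℓ j * x - (⌊ℓ j * x⌋₊ : ℝ))
        ≤ ∑ _j ∈ Finset.range m, (1:ℝ) := Finset.sum_le_sum fun j _ => g_le_one j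
      _ = m := by simp
  have h2 : ∑' j, (ℓ (j + m) * x - (⌊ℓ (j + m) * x⌋₊ : ℝ)) ≤ x * myTail ℓ m := by
    have : x * myTail ℓ m = ∑' j, ℓ (j + m) * x := by
      rw [myTail, tsum_mul_right, mul_comm]
    rw [this]
    refine Summable.tsum_le_tsum (fun j => ?_) ((summable_nat_add_iff m).2 (summable_g hsum hpos hx))
      ((summable_tail hsum m).mul_right x)
    have := Nat.floor_le (mul_nonneg (hpos (j+m)).le hx) (R := ℝ) (a := ℓ (j+m) * x)
    linarith [Nat.cast_nonneg (α := ℝ) ⌊ℓ (j+m) * x⌋₊]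
  linarith

/-- lower bound: if ℓ m * x < 1 then x * Tail m ≤ φ(x) -/
lemma phi_lower (hsum : Summable ℓ) (hpos : ∀ j, 0 < ℓ j) (hanti : Antitone ℓ)
    {x : ℝ} (hx : 0 ≤ x) {m : ℕ} (hm : ℓ m * x < 1) :
    x * myTail ℓ m ≤ phiNu ℓ x := by
  rw [phi_eq hsum hpos hx, ← Summable.sum_add_tsum_nat_add m (summable_g hsum hpos hx)]
  have h1 : (0:ℝ) ≤ ∑ j ∈ Finset.range m, (ℓ j * x - (⌊ℓ j * x⌋₊ : ℝ)) :=
    Finset.sum_nonneg fun j _ => g_nonneg hpos hx j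
  have h2 : ∑' j, (ℓ (j + m) * x - (⌊ℓ (j + m) * x⌋₊ : ℝ)) = x * myTail ℓ m := by
    have heq : ∀ j : ℕ, ℓ (j + m) * x - (⌊ℓ (j + m) * x⌋₊ : ℝ) = ℓ (j + m) * x := by
      intro j
      have hle : ℓ (j + m) * x < 1 :=
        lt_of_le_of_lt (mul_le_mul_of_nonneg_right (hanti (Nat.le_add_left m j)) hx) hm
      rw [Nat.floor_eq_zero.2 hle]
      simp
    rw [tsum_congr heq, myTail, tsum_mul_right, mul_comm]
  linarith
end helpers
section tails
variable {ℓ : ℕ → ℝ}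

lemma tail_split (hsum : Summable ℓ) (m n : ℕ) :
    myTail ℓ m = ∑ j ∈ Finset.range n, ℓ (j + m) + myTail ℓ (n + m) := by
  have h := Summable.sum_add_tsum_nat_add (f := fun j => ℓ (j + m)) n (summable_tail hsum m)
  rw [myTail, ← h, myTail]
  congr 1
  exact tsum_congr fun j => by ring_nf

lemma tail_ge (hsum : Summable ℓ) (hpos : ∀ j, 0 < ℓ j) (hanti : Antitone ℓ) (m n : ℕ) :
    (n : ℝ) * ℓ (n + m) ≤ myTail ℓ m := by
  calc (n:ℝ) * ℓ (n + m) = ∑ _j ∈ Finset.range n, ℓ (n + m) := by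
        rw [Finset.sum_const, Finset.card_range, nsmul_eq_mul]
    _ ≤ ∑ j ∈ Finset.range n, ℓ (j + m) := by
        refine Finset.sum_le_sum fun j hj => hanti ?_
        have := Finset.mem_range.1 hj
        omega
    _ ≤ myTail ℓ m := by
        refine Summable.sum_le_tsum _ (fun j _ => (hpos _).le) (summable_tail hsum m)

lemma tail_le_first (hsum : Summable ℓ) (hpos : ∀ j, 0 < ℓ j) (hanti : Antitone ℓ) (m n : ℕ) :
    myTail ℓ m ≤ (n : ℝ) * ℓ m + myTail ℓ (n + m) := by
  rw [tail_split hsum m n]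
  have : ∑ j ∈ Finset.range n, ℓ (j + m) ≤ (n:ℝ) * ℓ m := by
    calc ∑ j ∈ Finset.range n, ℓ (j + m) ≤ ∑ _j ∈ Finset.range n, ℓ m :=
          Finset.sum_le_sum fun j _ => hanti (Nat.le_add_left m j)
      _ = (n:ℝ) * ℓ m := by rw [Finset.sum_const, Finset.card_range, nsmul_eq_mul]
  linarith

lemma tail_tendsto_zero (hsum : Summable ℓ) :
    Tendsto (fun m => myTail ℓ m) atTop (𝓝 0) :=
  _root_.tendsto_sum_nat_add ℓ

lemma tail_anti (hsum : Summable ℓ) (hpos : ∀ j, 0 < ℓ j) : Antitone (myTail ℓ) := by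
  intro a b hab
  have := tail_split hsum a (b - a)
  have h2 : b - a + a = b := by omega
  rw [h2] at this
  rw [this]
  have : (0:ℝ) ≤ ∑ j ∈ Finset.range (b-a), ℓ (j + a) :=
    Finset.sum_nonneg fun j _ => (hpos _).le
  linarith
end tails
section tailbounds
variable {ℓ : ℕ → ℝ}

lemma mygeom (r : ℝ) (h0 : 0 ≤ r) (h1 : r < 1) (k : ℕ) : ∑ i ∈ Finset.range k, r^i ≤ (1-r)⁻¹ := by
  rw [geom_sum_eq (ne_of_lt h1) k]
  have hpos : (0:ℝ) < 1 - r := by linarith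
  have h2 : (r^k - 1)/(r-1) = (1 - r^k)/(1-r) := by
    rw [← neg_div_neg_eq]; ring_nf
  have h3 : (0:ℝ) ≤ r ^ k := by positivity
  rw [h2, ← one_div]
  gcongr; linarith

lemma rpow_neg_anti {a b s : ℝ} (ha : 0 < a) (hab : a ≤ b) (hs : 0 ≤ s) :
    b ^ (-s) ≤ a ^ (-s) := by
  rw [Real.rpow_neg (by linarith), Real.rpow_neg ha.le]
  exact inv_anti₀ (Real.rpow_pos_of_pos ha s) (Real.rpow_le_rpow ha.le hab hs)

lemma pow_rpow_comm (k : ℕ) (s : ℝ) : ((2:ℝ)^k) ^ s = ((2:ℝ)^s)^k := by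
  rw [← Real.rpow_natCast (2:ℝ) k, ← Real.rpow_natCast ((2:ℝ)^s) k,
      ← Real.rpow_mul (by norm_num), ← Real.rpow_mul (by norm_num), mul_comm]

/-- one doubling step -/
lemma tail_step (hsum : Summable ℓ) (hpos : ∀ j, 0 < ℓ j) (hanti : Antitone ℓ)
    {D C : ℝ} (hD : 0 < D) (hC : 0 < C) {J : ℕ}
    (hup : ∀ j, J ≤ j → ℓ j ≤ C * ((j:ℝ)+1) ^ (-(1/D)))
    {n : ℕ} (hJ : J ≤ n) (h1 : 1 ≤ n) :
    myTail ℓ n ≤ C * (n:ℝ) ^ (1 - 1/D) + myTail ℓ (2 * n) := by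
  have hn : (0:ℝ) < n := by exact_mod_cast h1
  have key : (n:ℝ) * ℓ n ≤ C * (n:ℝ) ^ (1 - 1/D) := by
    have h2 : ℓ n ≤ C * ((n:ℝ)+1) ^ (-(1/D)) := hup n hJ
    have h3 : ((n:ℝ)+1) ^ (-(1/D)) ≤ (n:ℝ) ^ (-(1/D)) :=
      rpow_neg_anti hn (by linarith) (by positivity)
    have h4 : (n:ℝ) * (n:ℝ) ^ (-(1/D)) = (n:ℝ) ^ (1 - 1/D) := by
      rw [sub_eq_add_neg, Real.rpow_add hn, Real.rpow_one]
    calc (n:ℝ) * ℓ n ≤ (n:ℝ) * (C * ((n:ℝ)) ^ (-(1/D))) := by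
          refine mul_le_mul_of_nonneg_left (h2.trans ?_) hn.le
          exact mul_le_mul_of_nonneg_left h3 hC.le
      _ = C * (n:ℝ) ^ (1 - 1/D) := by rw [← h4]; ring
  have := tail_le_first hsum hpos hanti n n
  have h2n : n + n = 2 * n := by ring
  rw [h2n] at this
  linarith

lemma tail_upper (hsum : Summable ℓ) (hpos : ∀ j, 0 < ℓ j) (hanti : Antitone ℓ)
    {D C : ℝ} (hD : 0 < D) (hD1 : D < 1) (hC : 0 < C) {J : ℕ}
    (hup : ∀ j, J ≤ j → ℓ j ≤ C * ((j:ℝ)+1) ^ (-(1/D))) :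
    ∀ m : ℕ, J ≤ m → 1 ≤ m →
      myTail ℓ m ≤ (C * (1 - (2:ℝ) ^ (1 - 1/D))⁻¹) * (m:ℝ) ^ (1 - 1/D) := by
  intro m hJ h1
  have hs : 1 < 1/D := by rw [lt_div_iff₀ hD]; linarith
  set r : ℝ := (2:ℝ) ^ (1 - 1/D) with hr
  have hr0 : 0 < r := Real.rpow_pos_of_pos (by norm_num) _
  have hr1 : r < 1 := Real.rpow_lt_one_of_one_lt_of_neg (by norm_num) (by linarith)
  have hm : (0:ℝ) < m := by exact_mod_cast h1
  -- induction claim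
  have claim : ∀ k : ℕ,
      myTail ℓ m ≤ C * (m:ℝ) ^ (1 - 1/D) * (∑ i ∈ Finset.range k, r^i)
        + myTail ℓ (2^k * m) := by
    intro k
    induction k with
    | zero => simp
    | succ k ih =>
      have hJk : J ≤ 2^k * m := le_trans hJ (Nat.le_mul_of_pos_left m (by positivity))
      have h1k : 1 ≤ 2^k * m := Nat.mul_pos (pow_pos (by norm_num) k) (by omega)
      have step := tail_step hsum hpos hanti hD hC hup hJk h1k
      have hcast : ((2^k * m : ℕ):ℝ) = (2:ℝ)^k * (m:ℝ) := by push_cast; ring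
      have hrw : ((2^k * m : ℕ):ℝ) ^ (1 - 1/D) = r^k * (m:ℝ) ^ (1 - 1/D) := by
        rw [hcast, Real.mul_rpow (by positivity) hm.le, pow_rpow_comm]
      have h2 : 2 * (2^k * m) = 2^(k+1) * m := by ring
      rw [hrw, h2] at step
      calc myTail ℓ m ≤ C * (m:ℝ) ^ (1 - 1/D) * (∑ i ∈ Finset.range k, r^i)
            + myTail ℓ (2^k * m) := ih
        _ ≤ C * (m:ℝ) ^ (1 - 1/D) * (∑ i ∈ Finset.range k, r^i)
            + (C * (r^k * (m:ℝ) ^ (1 - 1/D)) + myTail ℓ (2^(k+1) * m)) := by linarith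
        _ = C * (m:ℝ) ^ (1 - 1/D) * (∑ i ∈ Finset.range (k+1), r^i)
            + myTail ℓ (2^(k+1) * m) := by
            rw [Finset.sum_range_succ]; ring
  have hbound : ∀ k : ℕ,
      myTail ℓ m - (C * (1 - r)⁻¹) * (m:ℝ) ^ (1 - 1/D) ≤ myTail ℓ (2^k * m) := by
    intro k
    have hgeo := mygeom r hr0.le hr1 k
    have hmp : (0:ℝ) ≤ C * (m:ℝ) ^ (1 - 1/D) := by positivity
    have := claim k
    nlinarith [Real.rpow_pos_of_pos hm (1 - 1/D)]
  have htend : Tendsto (fun k : ℕ => myTail ℓ (2^k * m)) atTop (𝓝 0) := by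
    apply (tail_tendsto_zero hsum).comp
    apply tendsto_atTop_mono (f := id) (fun k => ?_) tendsto_id
    calc k ≤ 2^k := (Nat.lt_two_pow_self (n := k)).le
      _ ≤ 2^k * m := Nat.le_mul_of_pos_right _ (by omega)
  have := ge_of_tendsto htend (Eventually.of_forall hbound)
  linarith

lemma tail_lower (hsum : Summable ℓ) (hpos : ∀ j, 0 < ℓ j) (hanti : Antitone ℓ)
    {D c : ℝ} (hD : 0 < D) (hc : 0 < c) {J : ℕ}
    (hlow : ∀ j, J ≤ j → c * ((j:ℝ)+1) ^ (-(1/D)) ≤ ℓ j) :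
    ∀ m : ℕ, J ≤ m → 1 ≤ m →
      (c * (3:ℝ) ^ (-(1/D))) * (m:ℝ) ^ (1 - 1/D) ≤ myTail ℓ m := by
  intro m hJ h1
  have hm : (0:ℝ) < m := by exact_mod_cast h1
  have h2 := tail_ge hsum hpos hanti m m
  have h3 : c * ((2*m:ℝ)+1) ^ (-(1/D)) ≤ ℓ (m + m) := by
    have := hlow (m + m) (by omega)
    convert this using 4
    push_cast; ring
  have h4 : ((3:ℝ)*m) ^ (-(1/D)) ≤ ((2*m:ℝ)+1) ^ (-(1/D)) := by
    have hm1 : (1:ℝ) ≤ m := by exact_mod_cast h1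
    apply rpow_neg_anti (by linarith) (by linarith) (by positivity)
  have h5 : ((3:ℝ)*m) ^ (-(1/D)) = (3:ℝ) ^ (-(1/D)) * (m:ℝ) ^ (-(1/D)) :=
    Real.mul_rpow (by norm_num) hm.le
  have h6 : (m:ℝ) * (m:ℝ) ^ (-(1/D)) = (m:ℝ) ^ (1 - 1/D) := by
    rw [sub_eq_add_neg, Real.rpow_add hm, Real.rpow_one]
  have h7 : (c * (3:ℝ) ^ (-(1/D))) * (m:ℝ) ^ (1 - 1/D) ≤ (m:ℝ) * ℓ (m + m) := by
    rw [← h6]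
    calc (c * (3:ℝ) ^ (-(1/D))) * ((m:ℝ) * (m:ℝ) ^ (-(1/D)))
        = (m:ℝ) * (c * ((3:ℝ) ^ (-(1/D)) * (m:ℝ) ^ (-(1/D)))) := by ring
      _ = (m:ℝ) * (c * ((3:ℝ)*m) ^ (-(1/D))) := by rw [h5]
      _ ≤ (m:ℝ) * (c * ((2*m:ℝ)+1) ^ (-(1/D))) := by
          refine mul_le_mul_of_nonneg_left ?_ hm.le
          exact mul_le_mul_of_nonneg_left h4 hc.le
      _ ≤ (m:ℝ) * ℓ (m + m) := mul_le_mul_of_nonneg_left h3 hm.le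
  linarith
end tailbounds
section forward
variable {ℓ : ℕ → ℝ}

lemma phi_bounds_of_alpha (hsum : Summable ℓ) (hpos : ∀ j, 0 < ℓ j) (hanti : Antitone ℓ)
    {D r C : ℝ} (hD : 0 < D) (hD1 : D < 1) (hr : 0 < r) (hC : 1 ≤ C) {J : ℕ} (hJ1 : 1 ≤ J)
    (hlow : ∀ j, J ≤ j → r ≤ ℓ j * ((j:ℝ)+1)^(1/D))
    (hup : ∀ j, J ≤ j → ℓ j * ((j:ℝ)+1)^(1/D) ≤ C) :
    ∃ c K : ℝ, 0 < c ∧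
      ∀ x : ℝ, 1 ≤ x → c * x^D ≤ phiNu ℓ x ∧ phiNu ℓ x ≤ K * x^D := by
  have hC0 : (0:ℝ) < C := by linarith
  have hs1 : 1 < 1/D := by rw [lt_div_iff₀ hD]; linarith
  have hup' : ∀ j, J ≤ j → ℓ j ≤ C * ((j:ℝ)+1) ^ (-(1/D)) := by
    intro j hj
    have hp : (0:ℝ) < ((j:ℝ)+1)^(1/D) := Real.rpow_pos_of_pos (by positivity) _
    rw [Real.rpow_neg (by positivity), ← div_eq_mul_inv, le_div_iff₀ hp]
    exact hup j hj
  have hlow' : ∀ j, J ≤ j → r * ((j:ℝ)+1) ^ (-(1/D)) ≤ ℓ j := by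
    intro j hj
    have hp : (0:ℝ) < ((j:ℝ)+1)^(1/D) := Real.rpow_pos_of_pos (by positivity) _
    rw [Real.rpow_neg (by positivity), ← div_eq_mul_inv, div_le_iff₀ hp]
    exact hlow j hj
  -- constants
  set K₀ : ℝ := C * (1 - (2:ℝ) ^ (1 - 1/D))⁻¹ with hK₀
  have hrlt1 : (2:ℝ) ^ (1 - 1/D) < 1 :=
    Real.rpow_lt_one_of_one_lt_of_neg (by norm_num) (by linarith)
  have hrpos : (0:ℝ) < (2:ℝ) ^ (1 - 1/D) := Real.rpow_pos_of_pos (by norm_num) _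
  have hK₀pos : 0 < K₀ := by
    apply mul_pos hC0
    rw [inv_pos]; linarith
  set K₃ : ℝ := C ^ D + (J:ℝ) + 2 with hK₃
  have hK₃pos : 0 < K₃ := by positivity
  refine ⟨r * (3:ℝ) ^ (-(1/D)) * K₃ ^ (1 - 1/D),
    K₃ + K₀ * C ^ (D - 1), by positivity, ?_⟩
  intro x hx
  have hx0 : (0:ℝ) < x := by linarith
  have hxD1 : (1:ℝ) ≤ x ^ D := Real.one_le_rpow hx hD.le
  have hCx : (0:ℝ) < C * x := by positivity
  have hCxD : (0:ℝ) < (C*x) ^ D := Real.rpow_pos_of_pos hCx _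
  set m : ℕ := ⌈(C*x) ^ D⌉₊ + J + 1 with hm
  have hmJ : J ≤ m := by omega
  have hm1 : 1 ≤ m := by omega
  have hmpos : (0:ℝ) < m := by exact_mod_cast hm1
  have hmge : (C*x) ^ D ≤ (m:ℝ) := by
    have := Nat.le_ceil ((C*x) ^ D)
    have h2 : ((⌈(C*x) ^ D⌉₊ : ℕ):ℝ) ≤ (m:ℝ) := by
      exact_mod_cast (by omega : ⌈(C*x) ^ D⌉₊ ≤ m)
    linarith
  have hmle : (m:ℝ) ≤ K₃ * x ^ D := by
    have h1 : ((⌈(C*x) ^ D⌉₊ : ℕ):ℝ) < (C*x) ^ D + 1 := Nat.ceil_lt_add_one hCxD.le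
    have h2 : (m:ℝ) = ((⌈(C*x) ^ D⌉₊ : ℕ):ℝ) + (J:ℝ) + 1 := by push_cast [hm]; ring
    have h3 : (C*x) ^ D = C ^ D * x ^ D := Real.mul_rpow hC0.le hx0.le
    have h5 : C ^ D * 1 ≤ C ^ D * x ^ D := by
      refine mul_le_mul_of_nonneg_left hxD1 (by positivity)
    have h6 : (J:ℝ) * 1 ≤ (J:ℝ) * x ^ D :=
      mul_le_mul_of_nonneg_left hxD1 (Nat.cast_nonneg J)
    rw [h2, hK₃]
    nlinarith [h1, h3, h5, h6, hxD1]
  -- upper bound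
  have hTup : myTail ℓ m ≤ K₀ * (m:ℝ) ^ (1 - 1/D) :=
    tail_upper hsum hpos hanti hD hD1 hC0 hup' m hmJ hm1
  have hmnegpow : (m:ℝ) ^ (1 - 1/D) ≤ ((C*x) ^ D) ^ (1 - 1/D) := by
    have : (1 : ℝ) - 1/D = -(1/D - 1) := by ring
    rw [this]
    exact rpow_neg_anti hCxD hmge (by linarith)
  have hCxpow : ((C*x) ^ D) ^ (1 - 1/D) = (C*x) ^ (D - 1) := by
    rw [← Real.rpow_mul hCx.le]
    congr 1
    field_simp
  have hsplit : (C*x) ^ (D-1) = C ^ (D-1) * x ^ (D-1) := Real.mul_rpow hC0.le hx0.le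
  have hxx : x * x ^ (D-1) = x ^ D := by
    nth_rewrite 1 [← Real.rpow_one x]
    rw [← Real.rpow_add hx0]; ring_nf
  have hupper : phiNu ℓ x ≤ (K₃ + K₀ * C ^ (D - 1)) * x ^ D := by
    have h1 := phi_upper hsum hpos hx0.le m
    have h2 : x * myTail ℓ m ≤ K₀ * C ^ (D-1) * x ^ D := by
      calc x * myTail ℓ m ≤ x * (K₀ * (m:ℝ) ^ (1 - 1/D)) := by
            exact mul_le_mul_of_nonneg_left hTup hx0.le
        _ ≤ x * (K₀ * ((C*x) ^ D) ^ (1 - 1/D)) := by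
            refine mul_le_mul_of_nonneg_left (mul_le_mul_of_nonneg_left hmnegpow hK₀pos.le) hx0.le
        _ = K₀ * C ^ (D-1) * (x * x ^ (D-1)) := by rw [hCxpow, hsplit]; ring
        _ = K₀ * C ^ (D-1) * x ^ D := by rw [hxx]
    nlinarith
  -- lower bound
  have hℓmx : ℓ m * x < 1 := by
    have h1 : ℓ m ≤ C / ((m:ℝ)+1) ^ (1/D) := by
      have hp : (0:ℝ) < ((m:ℝ)+1)^(1/D) := Real.rpow_pos_of_pos (by positivity) _
      rw [le_div_iff₀ hp]; exact hup m hmJ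
    have h2 : C * x < ((m:ℝ)+1) ^ (1/D) := by
      have ha : C * x = ((C*x) ^ D) ^ (1/D) := by
        rw [← Real.rpow_mul hCx.le]
        rw [mul_one_div, div_self (ne_of_gt hD), Real.rpow_one]
      have hb : ((C*x) ^ D) ^ (1/D) < ((C*x) ^ D + 1) ^ (1/D) :=
        Real.rpow_lt_rpow hCxD.le (lt_add_one _) (by positivity)
      have hc2 : ((C*x) ^ D + 1) ^ (1/D) ≤ ((m:ℝ)+1) ^ (1/D) :=
        Real.rpow_le_rpow (by positivity) (by linarith) (by positivity)
      rw [ha]; exact lt_of_lt_of_le hb hc2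
    have hp : (0:ℝ) < ((m:ℝ)+1)^(1/D) := Real.rpow_pos_of_pos (by positivity) _
    calc ℓ m * x ≤ (C / ((m:ℝ)+1) ^ (1/D)) * x := by
          exact mul_le_mul_of_nonneg_right h1 hx0.le
      _ = (C * x) / ((m:ℝ)+1) ^ (1/D) := by ring
      _ < 1 := by rw [div_lt_one hp]; exact h2
  have hTlow : (r * (3:ℝ) ^ (-(1/D))) * (m:ℝ) ^ (1 - 1/D) ≤ myTail ℓ m :=
    tail_lower hsum hpos hanti hD hr hlow' m hmJ hm1
  have hmpow2 : (K₃ * x ^ D) ^ (1 - 1/D) ≤ (m:ℝ) ^ (1 - 1/D) := by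
    have : (1 : ℝ) - 1/D = -(1/D - 1) := by ring
    rw [this]
    exact rpow_neg_anti hmpos hmle (by linarith)
  have hK₃pow : (K₃ * x ^ D) ^ (1 - 1/D) = K₃ ^ (1 - 1/D) * x ^ (D - 1) := by
    rw [Real.mul_rpow hK₃pos.le (by positivity), ← Real.rpow_mul hx0.le]
    congr 2
    field_simp
  have hlower : r * (3:ℝ) ^ (-(1/D)) * K₃ ^ (1 - 1/D) * x ^ D ≤ phiNu ℓ x := by
    have h1 := phi_lower hsum hpos hanti hx0.le hℓmx
    have h2 : r * (3:ℝ) ^ (-(1/D)) * K₃ ^ (1 - 1/D) * x ^ D ≤ x * myTail ℓ m := by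
      calc r * (3:ℝ) ^ (-(1/D)) * K₃ ^ (1 - 1/D) * x ^ D
          = (r * (3:ℝ) ^ (-(1/D))) * (K₃ ^ (1 - 1/D) * x ^ (D-1)) * x := by
            rw [← hxx]; ring
        _ = (r * (3:ℝ) ^ (-(1/D))) * (K₃ * x ^ D) ^ (1 - 1/D) * x := by rw [hK₃pow]
        _ ≤ (r * (3:ℝ) ^ (-(1/D))) * (m:ℝ) ^ (1 - 1/D) * x := by
            refine mul_le_mul_of_nonneg_right (mul_le_mul_of_nonneg_left hmpow2 (by positivity)) hx0.le
        _ ≤ x * myTail ℓ m := by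
            rw [mul_comm]
            exact mul_le_mul_of_nonneg_left hTlow hx0.le
    linarith
  exact ⟨hlower, hupper⟩
end forward
section reverse
variable {ℓ : ℕ → ℝ}

/-- tail bound from an upper bound on φ -/
lemma tail_of_phi_upper (hsum : Summable ℓ) (hpos : ∀ j, 0 < ℓ j) (hanti : Antitone ℓ)
    {D K X₀ : ℝ} (hD : 0 < D) (hD1 : D < 1) (hK : 0 < K) (hX₀ : 1 ≤ X₀)
    (hphi : ∀ x : ℝ, X₀ ≤ x → phiNu ℓ x ≤ K * x ^ D) :
    ∃ M₀ : ℕ, 1 ≤ M₀ ∧ ∀ m, M₀ ≤ m → myTail ℓ m ≤ (K * 2 ^ (1-D)) * ℓ m ^ (1-D) := by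
  have hℓ0 : Tendsto ℓ atTop (𝓝 0) := hsum.tendsto_atTop_zero
  have hev : ∀ᶠ m in atTop, ℓ m < (2 * X₀)⁻¹ := by
    have h := hℓ0.eventually (eventually_lt_nhds (show (0:ℝ) < (2 * X₀)⁻¹ by positivity))
    simpa using h
  obtain ⟨M₁, hM₁⟩ := eventually_atTop.1 hev
  refine ⟨max M₁ 1, le_max_right _ _, fun m hm => ?_⟩
  have hℓm : 0 < ℓ m := hpos m
  have hsmall : ℓ m < (2 * X₀)⁻¹ := hM₁ m (le_trans (le_max_left _ _) hm)
  set x : ℝ := (2 * ℓ m)⁻¹ with hxdef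
  have hx0 : 0 < x := by positivity
  have hxX : X₀ ≤ x := by
    have ha : 2 * ℓ m ≤ X₀⁻¹ := by
      have : (2:ℝ) * (2 * X₀)⁻¹ = X₀⁻¹ := by field_simp
      nlinarith
    have hb := inv_anti₀ (show (0:ℝ) < 2 * ℓ m by positivity) ha
    rwa [inv_inv] at hb
  have hℓmx : ℓ m * x < 1 := by
    rw [hxdef]
    rw [mul_inv_lt_iff₀ (by positivity)]
    nlinarith
  have h1 : x * myTail ℓ m ≤ K * x ^ D := le_trans
    (phi_lower hsum hpos hanti hx0.le hℓmx) (hphi x hxX)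
  have hxx : x ^ (D - 1) * x = x ^ D := by
    nth_rewrite 2 [← Real.rpow_one x]
    rw [← Real.rpow_add hx0]; ring_nf
  have h2 : myTail ℓ m ≤ K * x ^ (D - 1) := by
    rw [← mul_le_mul_iff_left₀ hx0, mul_assoc, hxx, mul_comm (myTail ℓ m) x]
    exact h1
  have h3 : x ^ (D - 1) = (2 * ℓ m) ^ (1 - D) := by
    rw [hxdef, Real.inv_rpow (by positivity), ← Real.rpow_neg (by positivity)]
    ring_nf
  have h4 : (2 * ℓ m) ^ (1 - D) = 2 ^ (1-D) * ℓ m ^ (1-D) :=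
    Real.mul_rpow (by norm_num) hℓm.le
  calc myTail ℓ m ≤ K * x ^ (D-1) := h2
    _ = (K * 2 ^ (1-D)) * ℓ m ^ (1-D) := by rw [h3, h4]; ring

end reverse
section alphaupper
variable {ℓ : ℕ → ℝ}

lemma alpha_upper_of_tail (hsum : Summable ℓ) (hpos : ∀ j, 0 < ℓ j) (hanti : Antitone ℓ)
    {D K₆ : ℝ} (hD : 0 < D) (hD1 : D < 1) (hK : 0 < K₆) {M₀ : ℕ} (hM₀ : 1 ≤ M₀)
    (htail : ∀ m, M₀ ≤ m → myTail ℓ m ≤ K₆ * ℓ m ^ (1-D)) :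
    ∃ Cb : ℝ, 0 < Cb ∧ ∀ m, M₀ ≤ m → ℓ m * ((m:ℝ)+1) ^ (1/D) ≤ Cb := by
  set b : ℕ → ℝ := fun n => ℓ n * (n:ℝ) ^ (1/D) with hb
  have hbnn : ∀ n, 0 ≤ b n := fun n =>
    mul_nonneg (hpos n).le (Real.rpow_nonneg (by positivity) _)
  set A : ℝ := K₆ * (3:ℝ) ^ (1/D) with hA
  have hApos : 0 < A := mul_pos hK (Real.rpow_pos_of_pos (by norm_num) _)
  have hne : (Finset.range (2*M₀)).Nonempty := ⟨0, Finset.mem_range.2 (by omega)⟩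
  set B₀ : ℝ := (Finset.range (2*M₀)).sup' hne b with hB₀
  set B : ℝ := max B₀ ((max A 1) ^ (1/D)) with hB
  have hB1 : (1:ℝ) ≤ (max A 1) ^ (1/D) := Real.one_le_rpow (le_max_right _ _) (by positivity)
  have hBpos : 0 < B := by
    have := le_max_right B₀ ((max A 1) ^ (1/D))
    linarith
  have hBD : A ≤ B ^ D := by
    have h1 : ((max A 1) ^ (1/D)) ^ D = max A 1 := by
      rw [← Real.rpow_mul (by positivity), one_div_mul_cancel (ne_of_gt hD), Real.rpow_one]
    calc A ≤ max A 1 := le_max_left _ _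
      _ = ((max A 1) ^ (1/D)) ^ D := h1.symm
      _ ≤ B ^ D := Real.rpow_le_rpow (by positivity) (le_max_right _ _) hD.le
  -- doubling step
  have hstep : ∀ m : ℕ, 2*M₀ ≤ m → b m ≤ A * (b (m/2)) ^ (1 - D) := by
    intro m hm
    set n : ℕ := m / 2 with hn
    have harith : M₀ ≤ n ∧ 2*n ≤ m ∧ m ≤ 3*n ∧ 1 ≤ n := by omega
    obtain ⟨hnM, h2n, h3n, hn1⟩ := harith
    have hnR : (1:ℝ) ≤ (n:ℝ) := by exact_mod_cast hn1
    have hℓn : 0 < ℓ n := hpos n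
    have hℓm : 0 < ℓ m := hpos m
    -- ℓ m * n ≤ K₆ ℓ n ^ (1-D)
    have e1 : (n:ℝ) * ℓ m ≤ K₆ * ℓ n ^ (1-D) := by
      have i1 : ℓ m ≤ ℓ (n + n) := hanti (by omega)
      have i2 : (n:ℝ) * ℓ (n + n) ≤ myTail ℓ n := tail_ge hsum hpos hanti n n
      have i3 := htail n hnM
      nlinarith
    -- b m ≤ ℓ m * (3n)^(1/D)
    have e2 : b m ≤ ℓ m * ((3*n:ℝ)) ^ (1/D) := by
      refine mul_le_mul_of_nonneg_left ?_ hℓm.le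
      refine Real.rpow_le_rpow (by positivity) ?_ (by positivity)
      exact_mod_cast h3n
    have e3 : ((3*n:ℝ)) ^ (1/D) = (3:ℝ)^(1/D) * (n:ℝ)^(1/D) :=
      Real.mul_rpow (by norm_num) (by positivity)
    -- RHS identity
    have e4 : A * (b n) ^ (1 - D)
        = (3:ℝ)^(1/D) * (n:ℝ)^(1/D) * (K₆ * ℓ n ^ (1-D)) / (n:ℝ) := by
      have j1 : (b n) ^ (1-D) = ℓ n ^ (1-D) * ((n:ℝ)^(1/D)) ^ (1-D) :=
        Real.mul_rpow hℓn.le (by positivity)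
      have j2 : ((n:ℝ)^(1/D)) ^ (1-D) = (n:ℝ) ^ (1/D - 1) := by
        rw [← Real.rpow_mul (by positivity)]
        congr 1
        field_simp
      have j3 : (n:ℝ) ^ (1/D - 1) = (n:ℝ)^(1/D) / (n:ℝ) := by
        rw [Real.rpow_sub (by linarith), Real.rpow_one]
      rw [j1, j2, j3, hA]
      field_simp
    rw [e4, le_div_iff₀ (by linarith : (0:ℝ) < (n:ℝ))]
    calc b m * (n:ℝ) ≤ ℓ m * ((3*n:ℝ)) ^ (1/D) * (n:ℝ) := by
          exact mul_le_mul_of_nonneg_right e2 (by linarith)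
      _ = (3:ℝ)^(1/D) * (n:ℝ)^(1/D) * ((n:ℝ) * ℓ m) := by rw [e3]; ring
      _ ≤ (3:ℝ)^(1/D) * (n:ℝ)^(1/D) * (K₆ * ℓ n ^ (1-D)) := by
          refine mul_le_mul_of_nonneg_left e1 (by positivity)
  -- strong induction: b m ≤ B for all m ≥ M₀
  have hmain : ∀ m : ℕ, M₀ ≤ m → b m ≤ B := by
    intro m
    induction m using Nat.strong_induction_on with
    | _ m ih =>
      intro hM
      by_cases hcase : m < 2*M₀
      · exact le_trans (Finset.le_sup' b (Finset.mem_range.2 hcase)) (le_max_left _ _)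
      · push_neg at hcase
        have hrec := ih (m/2) (by omega) (by omega)
        have h1 : b m ≤ A * (b (m/2)) ^ (1 - D) := hstep m hcase
        have h2 : (b (m/2)) ^ (1-D) ≤ B ^ (1-D) :=
          Real.rpow_le_rpow (hbnn _) hrec (by linarith)
        have h3 : A * B ^ (1-D) ≤ B ^ D * B ^ (1-D) :=
          mul_le_mul_of_nonneg_right hBD (Real.rpow_nonneg hBpos.le _)
        have h4 : B ^ D * B ^ (1-D) = B := by
          rw [← Real.rpow_add hBpos]; norm_num
        calc b m ≤ A * (b (m/2)) ^ (1-D) := h1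
          _ ≤ A * B ^ (1-D) := mul_le_mul_of_nonneg_left h2 hApos.le
          _ ≤ B ^ D * B ^ (1-D) := h3
          _ = B := h4
  -- conclude with (m+1)
  refine ⟨(2:ℝ)^(1/D) * B, by positivity, fun m hm => ?_⟩
  have hm1 : 1 ≤ m := le_trans hM₀ hm
  have hmR : (1:ℝ) ≤ (m:ℝ) := by exact_mod_cast hm1
  have h1 : ((m:ℝ)+1) ^ (1/D) ≤ ((2*m:ℝ)) ^ (1/D) :=
    Real.rpow_le_rpow (by positivity) (by linarith) (by positivity)
  have h2 : ((2*m:ℝ)) ^ (1/D) = (2:ℝ)^(1/D) * (m:ℝ)^(1/D) :=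
    Real.mul_rpow (by norm_num) (by positivity)
  calc ℓ m * ((m:ℝ)+1) ^ (1/D) ≤ ℓ m * ((2:ℝ)^(1/D) * (m:ℝ)^(1/D)) := by
        rw [← h2]; exact mul_le_mul_of_nonneg_left h1 (hpos m).le
    _ = (2:ℝ)^(1/D) * b m := by rw [hb]; ring
    _ ≤ (2:ℝ)^(1/D) * B := by
        refine mul_le_mul_of_nonneg_left (hmain m hm) (by positivity)
end alphaupper
section alphalower
variable {ℓ : ℕ → ℝ}

lemma alpha_lower_of_phi (hsum : Summable ℓ) (hpos : ∀ j, 0 < ℓ j) (hanti : Antitone ℓ)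
    {D c K₆ X₀ : ℝ} (hD : 0 < D) (hD1 : D < 1) (hc : 0 < c) (hK : 0 < K₆) (hX₀ : 1 ≤ X₀)
    {M₀ : ℕ}
    (hphi : ∀ x : ℝ, X₀ ≤ x → c * x ^ D ≤ phiNu ℓ x)
    (htail : ∀ m, M₀ ≤ m → myTail ℓ m ≤ K₆ * ℓ m ^ (1-D)) :
    ∃ η : ℝ, 0 < η ∧ ∃ N : ℕ, ∀ n, N ≤ n → η ≤ ℓ n * ((n:ℝ)+1) ^ (1/D) := by
  -- choose S
  have htend : Tendsto (fun s : ℝ => K₆ * s ^ (D-1)) atTop (𝓝 0) := by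
    have h0 := (tendsto_rpow_neg_atTop (y := 1-D) (by linarith)).const_mul K₆
    rw [mul_zero] at h0
    convert h0 using 3 with s
    ring_nf
  have hev : ∀ᶠ s : ℝ in atTop, K₆ * s ^ (D-1) < c/2 :=
    htend.eventually (eventually_lt_nhds (by positivity))
  obtain ⟨S, hS⟩ := (hev.and (eventually_ge_atTop (1:ℝ))).exists
  obtain ⟨hS2, hS1⟩ := hS
  have hS0 : (0:ℝ) < S := by linarith
  set η : ℝ := (c/2) ^ (1/D) / S with hη
  have hηpos : 0 < η := by positivity
  -- choose N
  have hℓ0 : Tendsto ℓ atTop (𝓝 0) := hsum.tendsto_atTop_zero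
  have hevℓ : ∀ᶠ n in atTop, ℓ n < (S * X₀)⁻¹ := by
    have h := hℓ0.eventually (eventually_lt_nhds (show (0:ℝ) < (S * X₀)⁻¹ by positivity))
    simpa using h
  obtain ⟨N₁, hN₁⟩ := eventually_atTop.1 hevℓ
  refine ⟨η, hηpos, max N₁ M₀, fun n hn => ?_⟩
  by_contra hcon
  push_neg at hcon
  have hℓn : 0 < ℓ n := hpos n
  have hsmall : ℓ n < (S * X₀)⁻¹ := hN₁ n (le_trans (le_max_left _ _) hn)
  have hnM : M₀ ≤ n + 1 := by
    have := le_trans (le_max_right N₁ M₀) hn; omega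
  set x : ℝ := (S * ℓ n)⁻¹ with hxdef
  have hx0 : 0 < x := by positivity
  have hxX : X₀ ≤ x := by
    have ha : S * ℓ n ≤ X₀⁻¹ := by
      have hb : S * (S * X₀)⁻¹ = X₀⁻¹ := by field_simp
      nlinarith
    have hb := inv_anti₀ (show (0:ℝ) < S * ℓ n by positivity) ha
    rwa [inv_inv] at hb
  have hxD : x ^ D = (S^D * ℓ n^D)⁻¹ := by
    rw [hxdef, Real.inv_rpow (by positivity), Real.mul_rpow hS0.le hℓn.le]
  have hxDpos : 0 < x ^ D := Real.rpow_pos_of_pos hx0 _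
  -- term 1 bound
  have h1 : ((n:ℝ)+1) < (c/2) * x ^ D := by
    have k0 : ((n:ℝ)+1) ^ (1/D) < η / ℓ n := by
      rw [lt_div_iff₀ hℓn]
      calc ((n:ℝ)+1) ^ (1/D) * ℓ n = ℓ n * ((n:ℝ)+1) ^ (1/D) := by ring
        _ < η := hcon
    have k1 : ((n:ℝ)+1) = (((n:ℝ)+1) ^ (1/D)) ^ D := by
      rw [← Real.rpow_mul (by positivity), one_div_mul_cancel (ne_of_gt hD), Real.rpow_one]
    have k2 : (((n:ℝ)+1) ^ (1/D)) ^ D < (η / ℓ n) ^ D :=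
      Real.rpow_lt_rpow (by positivity) k0 hD
    have k3 : (η / ℓ n) ^ D = η ^ D / ℓ n ^ D := Real.div_rpow hηpos.le hℓn.le D
    have k4 : η ^ D = (c/2) / S ^ D := by
      rw [hη, Real.div_rpow (by positivity) hS0.le,
        ← Real.rpow_mul (by positivity), one_div_mul_cancel (ne_of_gt hD), Real.rpow_one]
    have k5 : η ^ D / ℓ n ^ D = (c/2) * x ^ D := by
      rw [k4, hxD]
      rw [div_div, div_eq_mul_inv]
    rw [k1]
    rw [k3, k5] at k2
    exact k2
  -- term 2 bound
  have h2 : x * (K₆ * ℓ n ^ (1-D)) ≤ (c/2) * x ^ D := by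
    have k1 : x * ℓ n = S⁻¹ := by
      rw [hxdef]; field_simp
    have k2 : x ^ D * x ^ (1-D) = x := by
      rw [← Real.rpow_add hx0]; norm_num
    have k3 : (x * ℓ n) ^ (1-D) = x ^ (1-D) * ℓ n ^ (1-D) :=
      Real.mul_rpow hx0.le hℓn.le
    have k4 : (S⁻¹ : ℝ) ^ (1-D) = S ^ (D-1) := by
      rw [Real.inv_rpow hS0.le, ← Real.rpow_neg hS0.le]
      ring_nf
    have k5 : x * ℓ n ^ (1-D) = S ^ (D-1) * x ^ D := by
      nth_rewrite 1 [← k2]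
      calc x ^ D * x ^ (1-D) * ℓ n ^ (1-D) = x ^ D * (x ^ (1-D) * ℓ n ^ (1-D)) := by ring
        _ = x ^ D * (x * ℓ n) ^ (1-D) := by rw [k3]
        _ = x ^ D * S ^ (D-1) := by rw [k1, k4]
        _ = S ^ (D-1) * x ^ D := by ring
    calc x * (K₆ * ℓ n ^ (1-D)) = K₆ * (x * ℓ n ^ (1-D)) := by ring
      _ = K₆ * S ^ (D-1) * x ^ D := by rw [k5]; ring
      _ ≤ (c/2) * x ^ D := mul_le_mul_of_nonneg_right hS2.le hxDpos.le
  -- assemble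
  have hKx : c * x ^ D ≤ phiNu ℓ x := hphi x hxX
  have hup := phi_upper hsum hpos hx0.le (n+1)
  have hcast : ((n+1 : ℕ):ℝ) = (n:ℝ) + 1 := by push_cast; ring
  rw [hcast] at hup
  have htl : myTail ℓ (n+1) ≤ K₆ * ℓ n ^ (1-D) := by
    have i1 := htail (n+1) hnM
    have i2 : ℓ (n+1) ^ (1-D) ≤ ℓ n ^ (1-D) :=
      Real.rpow_le_rpow (hpos _).le (hanti (by omega)) (by linarith)
    nlinarith
  have t1 : x * myTail ℓ (n+1) ≤ x * (K₆ * ℓ n ^ (1-D)) :=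
    mul_le_mul_of_nonneg_left htl hx0.le
  linarith
end alphalower
/-- For a fractal string of dimension `D ∈ (0,1)`,
`0 < α_* ≤ α^* < ∞` holds iff `0 < δ_* ≤ δ^* < ∞` holds, where `α_*, α^*` are the
lower/upper limits of `ℓ_j j^{1/D}` and `δ_*, δ^*` those of `φ_ν(x)/x^D` with
`φ_ν(x) = W(x) - N_ν(x)`. -/
theorem alpha_iff_delta (ℓ : ℕ → ℝ) (h : IsFractalString ℓ) (D : ℝ)
    (hD : D ∈ Set.Ioo (0:ℝ) 1) (hdim : minkDim ℓ = D) :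
    (0 < Filter.liminf
        (fun j : ℕ => ENNReal.ofReal (ℓ j * ((j : ℝ) + 1) ^ (1 / D))) atTop ∧
      Filter.limsup
        (fun j : ℕ => ENNReal.ofReal (ℓ j * ((j : ℝ) + 1) ^ (1 / D))) atTop < ⊤) ↔
    (0 < Filter.liminf
        (fun x : ℝ => ENNReal.ofReal (phiNu ℓ x / x ^ D)) atTop ∧
      Filter.limsup
        (fun x : ℝ => ENNReal.ofReal (phiNu ℓ x / x ^ D)) atTop < ⊤) := by
  obtain ⟨hpos, hanti, hsum⟩ := h
  obtain ⟨hD0, hD1⟩ := hD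
  constructor
  · rintro ⟨hlo, hhi⟩
    -- extract real bounds on ℓ j (j+1)^(1/D)
    set f : ℕ → ENNReal := fun j => ENNReal.ofReal (ℓ j * ((j : ℝ) + 1) ^ (1 / D)) with hf
    set a : ENNReal := min (Filter.liminf f atTop) 1 with ha
    have ha0 : a ≠ 0 := by
      exact ne_of_gt (lt_min hlo one_pos)
    have hatop : a ≠ ⊤ := by
      exact ne_top_of_le_ne_top ENNReal.one_ne_top (min_le_right _ _)
    have hhalf : a / 2 < Filter.liminf f atTop :=
      lt_of_lt_of_le (ENNReal.half_lt_self ha0 hatop) (min_le_left _ _)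
    have hev1 := Filter.eventually_lt_of_lt_liminf hhalf
    set r : ℝ := (a / 2).toReal with hr
    have hrpos : 0 < r := ENNReal.toReal_pos
      (by simp [ENNReal.div_eq_zero_iff, ha0]) (by simp [ENNReal.div_eq_top, hatop])
    set Q : ENNReal := Filter.limsup f atTop + 1 with hQ
    have hQtop : Q ≠ ⊤ := by finiteness
    have hQlt : Filter.limsup f atTop < Q :=
      ENNReal.lt_add_right (ne_of_lt hhi) one_ne_zero
    have hev2 := Filter.eventually_lt_of_limsup_lt hQlt
    set C : ℝ := max Q.toReal 1 with hC
    obtain ⟨J₀, hJ₀⟩ := eventually_atTop.1 (hev1.and hev2)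
    set J : ℕ := max J₀ 1 with hJ
    have hJ1 : 1 ≤ J := le_max_right _ _
    have hlow : ∀ j, J ≤ j → r ≤ ℓ j * ((j:ℝ)+1) ^ (1/D) := by
      intro j hj
      have h1 := (hJ₀ j (le_trans (le_max_left _ _) hj)).1
      have h2 : ENNReal.ofReal r = a / 2 := ENNReal.ofReal_toReal (by simp [ENNReal.div_eq_top, hatop])
      rw [← h2, hf] at h1
      exact le_of_lt ((ENNReal.ofReal_lt_ofReal_iff_of_nonneg hrpos.le).1 h1)
    have hup : ∀ j, J ≤ j → ℓ j * ((j:ℝ)+1) ^ (1/D) ≤ C := by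
      intro j hj
      have h1 := (hJ₀ j (le_trans (le_max_left _ _) hj)).2
      have hnn : 0 ≤ ℓ j * ((j:ℝ)+1) ^ (1/D) := by
        have := hpos j
        positivity
      have h2 : ℓ j * ((j:ℝ)+1) ^ (1/D) ≤ Q.toReal := by
        have h3 := ENNReal.toReal_mono hQtop (le_of_lt h1)
        rwa [ENNReal.toReal_ofReal hnn] at h3
      exact h2.trans (le_max_left _ _)
    obtain ⟨c, K, hc, hb⟩ := phi_bounds_of_alpha hsum hpos hanti hD0 hD1 hrpos
      (le_max_right _ _) hJ1 hlow hup
    constructor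
    · refine lt_of_lt_of_le (ENNReal.ofReal_pos.2 hc) ?_
      refine Filter.le_liminf_of_le (by isBoundedDefault) ?_
      filter_upwards [eventually_ge_atTop (1:ℝ)] with x hx
      have hx0 : (0:ℝ) < x := by linarith
      have hxD : (0:ℝ) < x ^ D := Real.rpow_pos_of_pos hx0 _
      refine ENNReal.ofReal_le_ofReal ?_
      rw [le_div_iff₀ hxD]
      exact (hb x hx).1
    · refine lt_of_le_of_lt ?_ (ENNReal.ofReal_lt_top (r := K))
      refine Filter.limsup_le_of_le (by isBoundedDefault) ?_
      filter_upwards [eventually_ge_atTop (1:ℝ)] with x hx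
      have hx0 : (0:ℝ) < x := by linarith
      have hxD : (0:ℝ) < x ^ D := Real.rpow_pos_of_pos hx0 _
      refine ENNReal.ofReal_le_ofReal ?_
      rw [div_le_iff₀ hxD]
      exact (hb x hx).2
  · rintro ⟨hlo, hhi⟩
    set f : ℝ → ENNReal := fun x => ENNReal.ofReal (phiNu ℓ x / x ^ D) with hf
    set a : ENNReal := min (Filter.liminf f atTop) 1 with ha
    have ha0 : a ≠ 0 := by
      exact ne_of_gt (lt_min hlo one_pos)
    have hatop : a ≠ ⊤ := by
      exact ne_top_of_le_ne_top ENNReal.one_ne_top (min_le_right _ _)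
    have hhalf : a / 2 < Filter.liminf f atTop :=
      lt_of_lt_of_le (ENNReal.half_lt_self ha0 hatop) (min_le_left _ _)
    have hev1 := Filter.eventually_lt_of_lt_liminf hhalf
    set c : ℝ := (a / 2).toReal with hc
    have hcpos : 0 < c := ENNReal.toReal_pos
      (by simp [ENNReal.div_eq_zero_iff, ha0]) (by simp [ENNReal.div_eq_top, hatop])
    set Q : ENNReal := Filter.limsup f atTop + 1 with hQ
    have hQtop : Q ≠ ⊤ := by finiteness
    have hQlt : Filter.limsup f atTop < Q :=
      ENNReal.lt_add_right (ne_of_lt hhi) one_ne_zero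
    have hev2 := Filter.eventually_lt_of_limsup_lt hQlt
    set K : ℝ := max Q.toReal 1 with hK
    have hKpos : (0:ℝ) < K := lt_of_lt_of_le one_pos (le_max_right _ _)
    obtain ⟨X₁, hX₁⟩ := eventually_atTop.1 (hev1.and hev2)
    set X₀ : ℝ := max X₁ 1 with hX₀def
    have hX₀ : (1:ℝ) ≤ X₀ := le_max_right _ _
    have hphilow : ∀ x : ℝ, X₀ ≤ x → c * x ^ D ≤ phiNu ℓ x := by
      intro x hx
      have hx1 : (1:ℝ) ≤ x := le_trans hX₀ hx
      have hx0 : (0:ℝ) < x := by linarith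
      have hxD : (0:ℝ) < x ^ D := Real.rpow_pos_of_pos hx0 _
      have h1 := (hX₁ x (le_trans (le_max_left _ _) hx)).1
      have h2 : ENNReal.ofReal c = a / 2 := ENNReal.ofReal_toReal (by simp [ENNReal.div_eq_top, hatop])
      rw [← h2, hf] at h1
      have h3 := le_of_lt ((ENNReal.ofReal_lt_ofReal_iff_of_nonneg hcpos.le).1 h1)
      rw [le_div_iff₀ hxD] at h3
      linarith
    have hphiup : ∀ x : ℝ, X₀ ≤ x → phiNu ℓ x ≤ K * x ^ D := by
      intro x hx
      have hx1 : (1:ℝ) ≤ x := le_trans hX₀ hx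
      have hx0 : (0:ℝ) < x := by linarith
      have hxD : (0:ℝ) < x ^ D := Real.rpow_pos_of_pos hx0 _
      have h1 := (hX₁ x (le_trans (le_max_left _ _) hx)).2
      have hnn : 0 ≤ phiNu ℓ x / x ^ D :=
        div_nonneg (phi_nonneg hsum hpos hx0.le) hxD.le
      have h2 : phiNu ℓ x / x ^ D ≤ Q.toReal := by
        have h3 := ENNReal.toReal_mono hQtop (le_of_lt h1)
        rwa [ENNReal.toReal_ofReal hnn] at h3
      have h4 : phiNu ℓ x / x ^ D ≤ K := h2.trans (le_max_left _ _)
      rw [div_le_iff₀ hxD] at h4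
      linarith
    obtain ⟨M₀, hM₀1, htail⟩ := tail_of_phi_upper hsum hpos hanti hD0 hD1 hKpos hX₀ hphiup
    have hK₆pos : (0:ℝ) < K * 2 ^ (1-D) :=
      mul_pos hKpos (Real.rpow_pos_of_pos (by norm_num) _)
    obtain ⟨Cb, hCb, hCbound⟩ := alpha_upper_of_tail hsum hpos hanti hD0 hD1 hK₆pos hM₀1 htail
    obtain ⟨η, hη, N, hN⟩ := alpha_lower_of_phi hsum hpos hanti hD0 hD1 hcpos hK₆pos hX₀
      hphilow htail
    constructor
    · refine lt_of_lt_of_le (ENNReal.ofReal_pos.2 hη) ?_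
      refine Filter.le_liminf_of_le (by isBoundedDefault) ?_
      filter_upwards [eventually_ge_atTop N] with j hj
      exact ENNReal.ofReal_le_ofReal (hN j hj)
    · refine lt_of_le_of_lt ?_ (ENNReal.ofReal_lt_top (r := Cb))
      refine Filter.limsup_le_of_le (by isBoundedDefault) ?_
      filter_upwards [eventually_ge_atTop M₀] with j hj
      exact ENNReal.ofReal_le_ofReal (hCbound j hj)
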